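/- Let n be a positive natural number, A₁, …, A_m ∈ M_n(ℂ), and let u₁ʳ, …, u_mʳ, v₁, …, v_m : ℝ → ℝ. Let x_r : ℝ → M_n(ℂ) be differentiable with x_r(t) invertible for all t and x_r'(t) = x_r(t)·(Σ_{k=1}^m u_kʳ(t) A_k), and let z : ℝ → M_n(ℂ) be differentiable with z(t) invertible for all t and z'(t) = Σ_{k=1}^m v_k(t)·z(t)·x_r(t)·A_k·x_r(t)⁻¹. Set x_∞ = x_r(0) and suppose z(0) = x₀·x_∞⁻¹ for a given invertible x₀ and that z(t) → 1 as t → ∞. Then x(t) := z(t)·x_r(t) satisfies x'(t) = x(t)·(Σ_{k=1}^m (v_k(t) + u_kʳ(t)) A_k) for all t, x(0) = x₀, and x(t)·x_r(t)⁻¹ → 1 as t → ∞. -/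

import Mathlib

attribute [local instance] Matrix.normedAddCommGroup Matrix.normedSpace

open Filter Topology

section aux
variable {n : ℕ}

noncomputable def mulCLM (n : ℕ) :
    Matrix (Fin n) (Fin n) ℂ →L[ℝ] Matrix (Fin n) (Fin n) ℂ →L[ℝ] Matrix (Fin n) (Fin n) ℂ :=
  LinearMap.toContinuousLinearMap
    ((LinearMap.toContinuousLinearMap : (Matrix (Fin n) (Fin n) ℂ →ₗ[ℝ] _) ≃ₗ[ℝ] _).toLinearMap
      ∘ₗ LinearMap.mul ℝ (Matrix (Fin n) (Fin n) ℂ))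

@[simp] lemma mulCLM_apply (a b : Matrix (Fin n) (Fin n) ℂ) : mulCLM n a b = a * b := rfl

lemma hasDerivAt_mul {f g : ℝ → Matrix (Fin n) (Fin n) ℂ}
    {f' g' : Matrix (Fin n) (Fin n) ℂ} {t : ℝ}
    (hf : HasDerivAt f f' t) (hg : HasDerivAt g g' t) :
    HasDerivAt (fun s => f s * g s) (f' * g t + f t * g') t := by
  have h := ((mulCLM n).isBoundedBilinearMap.hasFDerivAt (f t, g t)).comp_hasDerivAt t
    (hf.prodMk hg)
  have h2 : HasDerivAt (fun s => f s * g s) (f t * g' + f' * g t) t := by exact h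
  simpa [add_comm] using h2
end aux

theorem stmt_15 (n : ℕ) (hn : 0 < n) (m : ℕ)
    (A : Fin m → Matrix (Fin n) (Fin n) ℂ)
    (u v : Fin m → ℝ → ℝ)
    (xr z : ℝ → Matrix (Fin n) (Fin n) ℂ)
    (hxrinv : ∀ t, IsUnit (xr t))
    (hzinv : ∀ t, IsUnit (z t))
    (hxr : ∀ t : ℝ, HasDerivAt xr (xr t * ∑ k, u k t • A k) t)
    (hz : ∀ t : ℝ, HasDerivAt z (∑ k, v k t • (z t * (xr t * A k * (xr t)⁻¹))) t)
    (x₀ : Matrix (Fin n) (Fin n) ℂ) (hx₀ : IsUnit x₀)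
    (hz0 : z 0 = x₀ * (xr 0)⁻¹)
    (hzlim : Tendsto z atTop (𝓝 1)) :
    (∀ t : ℝ, HasDerivAt (fun s => z s * xr s)
      ((z t * xr t) * ∑ k, (v k t + u k t) • A k) t) ∧
    z 0 * xr 0 = x₀ ∧
    Tendsto (fun t => (z t * xr t) * (xr t)⁻¹) atTop (𝓝 1) := by
  have hinv : ∀ t, (xr t)⁻¹ * xr t = 1 := fun t =>
    Matrix.nonsing_inv_mul _ ((Matrix.isUnit_iff_isUnit_det _).mp (hxrinv t))
  have hinv' : ∀ t, xr t * (xr t)⁻¹ = 1 := fun t =>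
    Matrix.mul_nonsing_inv _ ((Matrix.isUnit_iff_isUnit_det _).mp (hxrinv t))
  refine ⟨fun t => ?_, ?_, ?_⟩
  · have h := hasDerivAt_mul (hz t) (hxr t)
    convert h using 1
    simp only [Finset.sum_mul, Finset.mul_sum, smul_mul_assoc, mul_add, mul_smul_comm, add_smul]
    rw [Finset.sum_add_distrib]
    congr 1
    · refine Finset.sum_congr rfl fun k _ => ?_
      congr 1
      simp only [mul_assoc, hinv, mul_one]
    · exact Finset.sum_congr rfl fun k _ => congrArg _ (mul_assoc _ _ _)
  · rw [hz0, mul_assoc, hinv 0, mul_one]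
  · have : (fun t => (z t * xr t) * (xr t)⁻¹) = z := by
      funext t; rw [mul_assoc, hinv' t, mul_one]
    rw [this]; exact hzlim
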